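/- Let f be nonnegative and Riemann integrable on [a,b], and for each n let d_{n,1}, …, d_{n,n} be nonnegative reals such that max_{1≤k≤n} d_{n,k} / n → 0 as n → ∞. Then lim_{n→∞} Σ_{k=1}^{n} f(a + (k/n)(b−a)) · (b−a)/(n + d_{n,k}) = ∫_a^b f(x) dx. -/

import Mathlib

open Filter Finset Real

/-- `f` is Riemann integrable on `[a,b]` with Riemann integral `I`:
for every `ε > 0` there is `δ > 0` such that every tagged partition
`a = x 0 < x 1 < … < x n = b` with mesh `< δ` and tags `ξ k ∈ [x (k-1), x k]`
has Riemann sum within `ε` of `I`. -/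
def IsRiemannIntegral (f : ℝ → ℝ) (a b I : ℝ) : Prop :=
  ∀ ε > 0, ∃ δ > 0, ∀ (n : ℕ) (x ξ : ℕ → ℝ),
    0 < n → x 0 = a → x n = b →
    (∀ k ∈ Finset.Icc 1 n, x (k - 1) < x k) →
    (∀ k ∈ Finset.Icc 1 n, x k - x (k - 1) < δ) →
    (∀ k ∈ Finset.Icc 1 n, ξ k ∈ Set.Icc (x (k - 1)) (x k)) →
    |(∑ k ∈ Finset.Icc 1 n, f (ξ k) * (x k - x (k - 1))) - I| < ε

theorem disturbing_mesh (f : ℝ → ℝ) (a b I : ℝ) (hab : a < b)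
    (hf : IsRiemannIntegral f a b I)
    (hpos : ∀ x ∈ Set.Icc a b, 0 ≤ f x)
    (d : ℕ → ℕ → ℝ)
    (hd0 : ∀ n : ℕ, ∀ k ∈ Finset.Icc 1 n, 0 ≤ d n k)
    (hd : ∀ ε > 0, ∃ N : ℕ, ∀ n ≥ N, ∀ k ∈ Finset.Icc 1 n, d n k / n < ε) :
    Tendsto (fun n : ℕ =>
      ∑ k ∈ Finset.Icc 1 n, f (a + (k : ℝ) / n * (b - a)) * ((b - a) / (n + d n k)))
      atTop (nhds I) := by
  have hba : (0:ℝ) < b - a := sub_pos.mpr hab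
  set S : ℕ → ℝ := fun n => ∑ k ∈ Finset.Icc 1 n,
    f (a + (k : ℝ) / n * (b - a)) * ((b - a) / n) with hSdef
  set T : ℕ → ℝ := fun n => ∑ k ∈ Finset.Icc 1 n,
    f (a + (k : ℝ) / n * (b - a)) * ((b - a) / (n + d n k)) with hTdef
  -- tags lie in [a,b]
  have htag : ∀ n : ℕ, ∀ k ∈ Finset.Icc 1 n, a + (k : ℝ) / n * (b - a) ∈ Set.Icc a b := by
    intro n k hk
    simp only [Finset.mem_Icc] at hk
    have hn : (0:ℝ) < n := by
      have : 0 < n := lt_of_lt_of_le hk.1 hk.2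
      exact_mod_cast this
    have h1 : (0:ℝ) ≤ (k:ℝ)/n := by positivity
    have h2 : (k:ℝ)/n ≤ 1 := by
      rw [div_le_one hn]; exact_mod_cast hk.2
    constructor
    · nlinarith
    · nlinarith
  have hfpos : ∀ n : ℕ, ∀ k ∈ Finset.Icc 1 n, 0 ≤ f (a + (k : ℝ) / n * (b - a)) :=
    fun n k hk => hpos _ (htag n k hk)
  have hSnonneg : ∀ n, 0 ≤ S n := by
    intro n
    apply Finset.sum_nonneg
    intro k hk
    have hn : (0:ℝ) ≤ (n:ℝ) := Nat.cast_nonneg n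
    have := hfpos n k hk
    positivity
  -- S tends to I
  have hSI : Tendsto S atTop (nhds I) := by
    rw [Metric.tendsto_atTop]
    intro ε hε
    obtain ⟨δ, hδ, H⟩ := hf ε hε
    obtain ⟨N, hN⟩ := exists_nat_gt ((b - a) / δ)
    refine ⟨max N 1, fun n hn => ?_⟩
    have hn1 : 1 ≤ n := le_trans (le_max_right N 1) hn
    have hnN : (N:ℝ) ≤ n := by exact_mod_cast le_trans (le_max_left N 1) hn
    have hnpos : (0:ℝ) < n := by exact_mod_cast hn1
    have hmesh : (b - a) / n < δ := by
      rw [div_lt_iff₀ hnpos]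
      have h := lt_of_lt_of_le hN hnN
      rw [div_lt_iff₀ hδ] at h
      nlinarith
    set x : ℕ → ℝ := fun k => a + (k : ℝ) / n * (b - a) with hx
    have hdiff : ∀ k ∈ Finset.Icc 1 n, x k - x (k - 1) = (b - a) / n := by
      intro k hk
      simp only [Finset.mem_Icc] at hk
      have hc : ((k - 1 : ℕ) : ℝ) = (k:ℝ) - 1 := by
        have := hk.1; push_cast [Nat.cast_sub this]; ring
      simp only [hx, hc]
      field_simp
      ring
    have key := H n x x (by omega) (by simp [hx]) (by simp [hx]; field_simp; ring)
      (fun k hk => by rw [show x (k-1) < x k ↔ 0 < x k - x (k-1) by constructor <;> intro <;> linarith, hdiff k hk]; positivity)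
      (fun k hk => by rw [hdiff k hk]; exact hmesh)
      (fun k hk => Set.right_mem_Icc.mpr (le_of_lt (by
        rw [show x (k-1) < x k ↔ 0 < x k - x (k-1) by constructor <;> intro <;> linarith, hdiff k hk]; positivity)))
    rw [Real.dist_eq, hSdef]
    have hsum : ∑ k ∈ Finset.Icc 1 n, f (x k) * (x k - x (k - 1))
        = ∑ k ∈ Finset.Icc 1 n, f (a + (k : ℝ) / n * (b - a)) * ((b - a) / n) := by
      apply Finset.sum_congr rfl
      intro k hk
      rw [hdiff k hk]
    rw [hsum] at key
    exact key
  have hI0 : 0 ≤ I := ge_of_tendsto' hSI hSnonneg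
  -- difference tends to 0
  have hST : Tendsto (fun n => S n - T n) atTop (nhds 0) := by
    rw [Metric.tendsto_atTop]
    intro ε hε
    have hε' : 0 < ε / (I + 1) := by positivity
    obtain ⟨N₂, hN₂⟩ := hd _ hε'
    have hev : ∀ᶠ n in atTop, S n < I + 1 :=
      hSI.eventually (eventually_lt_nhds (show I < I + 1 by linarith))
    obtain ⟨N₁, hN₁⟩ := eventually_atTop.mp hev
    refine ⟨max (max N₁ N₂) 1, fun n hn => ?_⟩
    have hn1 : 1 ≤ n := le_trans (le_max_right _ 1) hn
    have hnN₁ : N₁ ≤ n := le_trans (le_trans (le_max_left N₁ N₂) (le_max_left _ 1)) hn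
    have hnN₂ : N₂ ≤ n := le_trans (le_trans (le_max_right N₁ N₂) (le_max_left _ 1)) hn
    have hnpos : (0:ℝ) < n := by exact_mod_cast hn1
    have hterm : ∀ k ∈ Finset.Icc 1 n,
        0 ≤ f (a + (k : ℝ) / n * (b - a)) * ((b - a) / n)
          - f (a + (k : ℝ) / n * (b - a)) * ((b - a) / (n + d n k)) ∧
        f (a + (k : ℝ) / n * (b - a)) * ((b - a) / n)
          - f (a + (k : ℝ) / n * (b - a)) * ((b - a) / (n + d n k))
          ≤ (ε / (I + 1)) * (f (a + (k : ℝ) / n * (b - a)) * ((b - a) / n)) := by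
      intro k hk
      have hfk := hfpos n k hk
      have hdk := hd0 n k hk
      have hdn := hN₂ n hnN₂ k hk
      have hnd : (0:ℝ) < (n:ℝ) + d n k := by linarith
      have hgap : (b - a) / n - (b - a) / (n + d n k) = (b-a) * d n k / (n * (n + d n k)) := by
        field_simp; ring
      have hgap1 : (b - a) / n - (b - a) / (n + d n k) ≤ (d n k / n) * ((b - a) / n) := by
        rw [hgap]
        rw [show (d n k / n) * ((b - a) / n) = (b-a) * d n k / (n * n) by ring]
        gcongr
        linarith
      constructor
      · have : (b - a) / (n + d n k) ≤ (b - a) / n := by gcongr; linarith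
        nlinarith
      · have h2 : (b - a) / n - (b - a) / (n + d n k) ≤ (ε / (I + 1)) * ((b - a) / n) := by
          refine le_trans hgap1 ?_
          exact mul_le_mul_of_nonneg_right (le_of_lt hdn) (by positivity)
        nlinarith
    have hdiff0 : 0 ≤ S n - T n := by
      rw [hSdef, hTdef, ← Finset.sum_sub_distrib]
      exact Finset.sum_nonneg fun k hk => (hterm k hk).1
    have hdiffle : S n - T n ≤ (ε / (I + 1)) * S n := by
      rw [hSdef, hTdef, ← Finset.sum_sub_distrib]
      calc ∑ k ∈ Finset.Icc 1 n, (f (a + (k : ℝ) / n * (b - a)) * ((b - a) / n)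
            - f (a + (k : ℝ) / n * (b - a)) * ((b - a) / (n + d n k)))
          ≤ ∑ k ∈ Finset.Icc 1 n, (ε / (I + 1)) * (f (a + (k : ℝ) / n * (b - a)) * ((b - a) / n)) :=
            Finset.sum_le_sum fun k hk => (hterm k hk).2
        _ = (ε / (I + 1)) * S n := by rw [hSdef, Finset.mul_sum]
    have hSb := hN₁ n hnN₁
    rw [Real.dist_eq, sub_zero, abs_of_nonneg hdiff0]
    have : (ε / (I + 1)) * S n < (ε / (I + 1)) * (I + 1) :=
      mul_lt_mul_of_pos_left hSb hε'
    have heq : (ε / (I + 1)) * (I + 1) = ε := by field_simp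
    linarith
  have := hSI.sub hST
  simp only [sub_sub_cancel, sub_zero] at this
  exact this
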